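/- arXiv:0804.0882 — 2 statements merged into one kernel-verified Lean document; each statement's English description precedes it below -/
import Mathlib

section
/- The map sending a Grassmann necklace (I_1,...,I_n) to the decorated permutation π^: defined by: π(i) = j if I_{i+1} = (I_i \ {i}) ∪ {j} with j ≠ i; π(i) = i with col(i) = 1 if I_{i+1} = I_i and i ∉ I_i; π(i) = i with col(i) = -1 if I_{i+1} = I_i and i ∈ I_i, is a bijection between Grassmann necklaces on [n] and decorated permutations of [n]. Its inverse sends (π, col) to the necklace with I_r = { i ∈ [n] : i <_r π⁻¹(i), or π(i) = i and col(i) = -1 }, where <_r denotes the cyclic order starting at r. -/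
open Finset
open Fin.NatCast Fin.CommRing

/-- Position of `a` in the cyclic (linear) order starting at `t` on `Fin n`. -/
def cval {n : ℕ} (t a : Fin n) : ℕ := ((a - t : Fin n) : ℕ)

/-- Gale order on finsets of `Fin n` induced by the linear order with key `f`:
compare the sorted lists of keys coordinatewise. -/
def galeLEKey {n : ℕ} (f : Fin n → ℕ) (A B : Finset (Fin n)) : Prop :=
  List.Forall₂ (· ≤ ·) ((A.image f).sort (· ≤ ·)) ((B.image f).sort (· ≤ ·))

/-- Gale order `≤_t` induced by the cyclic order starting at `t`. -/
def galeLE {n : ℕ} (t : Fin n) (A B : Finset (Fin n)) : Prop :=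
  galeLEKey (cval t) A B

/-- The set of maximal elements of `D` w.r.t. `≤_a` (a singleton when `D` is nonempty). -/
def cmax {n : ℕ} (a : Fin n) (D : Finset (Fin n)) : Finset (Fin n) :=
  D.filter (fun x => ∀ y ∈ D, cval a y ≤ cval a x)

/-- The set of minimal elements of `D` w.r.t. `≤_a` (a singleton when `D` is nonempty). -/
def cmin {n : ℕ} (a : Fin n) (D : Finset (Fin n)) : Finset (Fin n) :=
  D.filter (fun x => ∀ y ∈ D, cval a x ≤ cval a y)


section AuxCval
variable {n : ℕ} [NeZero n]

omit [NeZero n] in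
lemma cval_lt (a b : Fin n) : cval a b < n := (b - a).isLt

lemma cval_self (a : Fin n) : cval a a = 0 := by simp [cval]

lemma cval_eq_zero_iff {a b : Fin n} : cval a b = 0 ↔ b = a := by
  unfold cval
  constructor
  · intro h
    have : b - a = 0 := Fin.ext h
    exact sub_eq_zero.mp this
  · rintro rfl; simp

lemma cast_cval (a b : Fin n) : ((cval a b : ℕ) : Fin n) = b - a := Fin.cast_val_eq_self _

lemma add_cval (a b : Fin n) : a + ((cval a b : ℕ) : Fin n) = b := by
  rw [cast_cval]; ring

lemma cval_cast (a : Fin n) (k : ℕ) (hk : k < n) : cval a (a + (k : Fin n)) = k := by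
  unfold cval
  rw [add_sub_cancel_left, Fin.val_natCast, Nat.mod_eq_of_lt hk]

lemma val_sub_cast (c : Fin n) (k : ℕ) (hk : k ≤ n) :
    ((c - (k : Fin n)) : Fin n).val = if k ≤ c.val then c.val - k else c.val + n - k := by
  have hn := c.isLt
  rw [Fin.sub_def]
  simp only [Fin.val_natCast]
  rcases eq_or_lt_of_le hk with rfl | hk'
  · simp only [Nat.mod_self, Nat.sub_zero]
    rw [Nat.add_comm, Nat.add_mod_right, Nat.mod_eq_of_lt hn, if_neg (by omega)]
    omega
  · rw [Nat.mod_eq_of_lt hk']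
    by_cases h : k ≤ c.val
    · rw [if_pos h]
      have h2 : n - k + c.val = (c.val - k) + n := by omega
      rw [h2, Nat.add_mod_right, Nat.mod_eq_of_lt (by omega)]
    · rw [if_neg h, Nat.mod_eq_of_lt (by omega)]
      omega

lemma cval_shift (a b : Fin n) (k : ℕ) (hk : k ≤ n) :
    cval (a + (k:Fin n)) b = if k ≤ cval a b then cval a b - k else cval a b + n - k := by
  show ((b - (a + (k:Fin n)) : Fin n) : ℕ) = _
  have h : b - (a + (k:Fin n)) = (b - a) - (k : Fin n) := by ring
  rw [h]; exact val_sub_cast _ _ hk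

lemma cval_succ (r y : Fin n) : cval (r+1) y = if y = r then n - 1 else cval r y - 1 := by
  have hn : 1 ≤ n := Nat.pos_of_ne_zero (NeZero.ne n)
  have h1 : (1 : Fin n) = ((1:ℕ) : Fin n) := by norm_cast
  rw [h1, cval_shift r y 1 hn]
  by_cases hy : y = r
  · subst hy
    rw [if_pos rfl, cval_self, if_neg (by omega)]
    omega
  · have h0 : cval r y ≠ 0 := fun h => hy (cval_eq_zero_iff.mp h)
    rw [if_pos (by omega), if_neg hy]

lemma cval_pred (x : Fin n) : cval (x+1) x = n - 1 := by rw [cval_succ, if_pos rfl]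

lemma add_nat_inj {a : Fin n} {k m : ℕ} (hk : k < n) (hm : m < n)
    (h : a + (k:Fin n) = a + (m:Fin n)) : k = m := by
  have h1 := cval_cast a k hk
  rw [h, cval_cast a m hm] at h1
  omega

lemma neg_one_cast : ((n-1 : ℕ) : Fin n) = -1 := by
  have hn : 1 ≤ n := Nat.pos_of_ne_zero (NeZero.ne n)
  have h : ((n-1 : ℕ) : Fin n) + 1 = 0 := by
    have : ((n-1 : ℕ) : Fin n) + ((1:ℕ) : Fin n) = ((n-1+1 : ℕ) : Fin n) := by push_cast; ring
    rw [show (1 : Fin n) = ((1:ℕ) : Fin n) by norm_cast, this, show n-1+1 = n by omega]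
    exact Fin.natCast_self n
  linear_combination h

lemma add_sub_one (a : Fin n) : a + 1 + ((n-1:ℕ) : Fin n) = a := by
  rw [neg_one_cast]; ring

end AuxCval

/-- A Grassmann necklace on `[n]`. -/
def IsGrassmannNecklace {n : ℕ} [NeZero n] (I : Fin n → Finset (Fin n)) : Prop :=
  ∀ i : Fin n,
    (i ∈ I i → ∃ j : Fin n, I (i + 1) = insert j (I i \ {i})) ∧
    (i ∉ I i → I (i + 1) = I i)


section AuxNecklace
variable {n : ℕ} [NeZero n] {I : Fin n → Finset (Fin n)}

lemma exit_mem (hI : IsGrassmannNecklace I) {i j : Fin n}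
    (h1 : j ∈ I i) (h2 : j ∉ I (i+1)) : i = j := by
  by_cases hm : i ∈ I i
  · obtain ⟨j', hj'⟩ := (hI i).1 hm
    rw [hj'] at h2
    simp only [Finset.mem_insert, Finset.mem_sdiff, Finset.mem_singleton] at h2
    push_neg at h2
    exact (h2.2 h1).symm
  · rw [(hI i).2 hm] at h2; exact absurd h1 h2

lemma card_step (hI : IsGrassmannNecklace I) (i : Fin n) : (I (i+1)).card ≤ (I i).card := by
  by_cases hm : i ∈ I i
  · obtain ⟨j, hj⟩ := (hI i).1 hm
    rw [hj]
    calc (insert j (I i \ {i})).card ≤ (I i \ {i}).card + 1 := Finset.card_insert_le _ _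
    _ = (I i).card := by
        rw [Finset.sdiff_singleton_eq_erase, Finset.card_erase_of_mem hm]
        have : 0 < (I i).card := Finset.card_pos.mpr ⟨i, hm⟩
        omega
  · rw [(hI i).2 hm]

lemma card_walk (hI : IsGrassmannNecklace I) (i : Fin n) :
    ∀ k : ℕ, (I (i + (k : Fin n))).card ≤ (I i).card := by
  intro k
  induction k with
  | zero => simp
  | succ k ih =>
    have h : i + ((k+1 : ℕ) : Fin n) = (i + (k : Fin n)) + 1 := by push_cast; ring
    rw [h]
    exact le_trans (card_step hI _) ih

lemma card_const (hI : IsGrassmannNecklace I) (i : Fin n) : (I (i+1)).card = (I i).card := by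
  have h1 := card_step hI i
  have h2 := card_walk hI (i+1) (n-1)
  rw [add_sub_one] at h2
  omega

/-- The permutation value extracted from the necklace at position `i`. -/
def nextF {n : ℕ} [NeZero n] (I : Fin n → Finset (Fin n)) (i : Fin n) : Fin n :=
  if h : (I (i+1) \ (I i \ {i})).Nonempty then (I (i+1) \ (I i \ {i})).min' h else i

lemma dite_min'_eq {D : Finset (Fin n)} {j i : Fin n} (h : D = {j}) :
    (if h' : D.Nonempty then D.min' h' else i) = j := by
  subst h
  rw [dif_pos (Finset.singleton_nonempty j)]
  exact Finset.min'_singleton j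

lemma dite_min'_empty {D : Finset (Fin n)} {i : Fin n} (h : D = ∅) :
    (if h' : D.Nonempty then D.min' h' else i) = i := by
  subst h; simp

lemma nextF_spec (hI : IsGrassmannNecklace I) (i : Fin n) :
    (I (i+1) = I i ∧ nextF I i = i) ∨
    (i ∈ I i ∧ nextF I i ≠ i ∧ nextF I i ∉ I i ∧ i ∉ I (i+1) ∧
      I (i+1) = insert (nextF I i) (I i \ {i})) := by
  by_cases hm : i ∈ I i
  · obtain ⟨j, hj⟩ := (hI i).1 hm
    have hcard := card_const hI i
    have hjS : j ∉ I i \ {i} := by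
      intro hjmem
      rw [hj, Finset.insert_eq_self.mpr hjmem, Finset.sdiff_singleton_eq_erase,
        Finset.card_erase_of_mem hm] at hcard
      have : 0 < (I i).card := Finset.card_pos.mpr ⟨i, hm⟩
      omega
    by_cases hji : j = i
    · rw [hji] at hj
      have heq : I (i+1) = I i := by
        rw [hj, Finset.sdiff_singleton_eq_erase, Finset.insert_erase hm]
      left
      refine ⟨heq, ?_⟩
      have hD : I (i+1) \ (I i \ {i}) = {i} := by
        rw [heq]
        ext x
        simp only [Finset.mem_sdiff, Finset.mem_singleton]
        constructor
        · rintro ⟨hx, hx2⟩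
          by_contra hne
          exact hx2 ⟨hx, hne⟩
        · rintro rfl; exact ⟨hm, fun h => h.2 rfl⟩
      exact dite_min'_eq hD
    · have hD : I (i+1) \ (I i \ {i}) = {j} := by
        rw [hj]
        ext x
        simp only [Finset.mem_sdiff, Finset.mem_insert, Finset.mem_singleton]
        constructor
        · rintro ⟨hx | hx, hx2⟩
          · exact hx
          · exact absurd hx hx2
        · rintro rfl
          exact ⟨Or.inl rfl, fun h => hjS (Finset.mem_sdiff.mpr ⟨h.1, by simpa using h.2⟩)⟩
      have hnf : nextF I i = j := dite_min'_eq hD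
      right
      refine ⟨hm, by rw [hnf]; exact hji, ?_, ?_, by rw [hnf]; exact hj⟩
      · rw [hnf]
        intro hmem
        exact hjS (Finset.mem_sdiff.mpr ⟨hmem, by simpa using hji⟩)
      · rw [hj]
        intro hmem
        rcases Finset.mem_insert.mp hmem with h | h
        · exact hji h.symm
        · exact (Finset.mem_sdiff.mp h).2 (Finset.mem_singleton_self i)
  · have heq := (hI i).2 hm
    left
    refine ⟨heq, ?_⟩
    have hD : I (i+1) \ (I i \ {i}) = ∅ := by
      rw [heq]
      ext x
      simp only [Finset.mem_sdiff, Finset.mem_singleton, Finset.notMem_empty, iff_false]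
      rintro ⟨hx, hx2⟩
      exact hx2 ⟨hx, fun he => hm (he ▸ hx)⟩
    exact dite_min'_empty hD

lemma exit_walk (hI : IsGrassmannNecklace I) (j : Fin n) :
    ∀ (k : ℕ) (a : Fin n), j ∈ I a → j ∉ I (a + (k : Fin n)) →
      ∃ m : ℕ, m < k ∧ a + (m : Fin n) = j ∧ j ∈ I (a + (m : Fin n)) ∧
        j ∉ I (a + (m : Fin n) + 1) := by
  intro k
  induction k with
  | zero => intro a h1 h2; simp at h2; exact absurd h1 h2
  | succ k ih =>
    intro a h1 h2
    rw [show ((k+1 : ℕ) : Fin n) = (k : Fin n) + 1 by push_cast; ring, ← add_assoc] at h2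
    by_cases hm : j ∈ I (a + (k : Fin n))
    · exact ⟨k, Nat.lt_succ_self k, exit_mem hI hm h2, hm, h2⟩
    · obtain ⟨m, hm1, hm2, hm3, hm4⟩ := ih a h1 hm
      exact ⟨m, by omega, hm2, hm3, hm4⟩

lemma entry_exit (hI : IsGrassmannNecklace I) {i j : Fin n}
    (h2 : j ∈ I (i+1)) (h1 : j ∉ I i) : j ∉ I (j+1) := by
  obtain ⟨m, hm1, hm2, hm3, hm4⟩ :=
    exit_walk hI j (n-1) (i+1) h2 (by rw [add_sub_one]; exact h1)
  rw [hm2] at hm4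
  exact hm4

lemma nextF_inj (hI : IsGrassmannNecklace I) : Function.Injective (nextF I) := by
  have hn : 0 < n := Nat.pos_of_ne_zero (NeZero.ne n)
  have mixed : ∀ a b : Fin n, nextF I a = nextF I b → I (a+1) = I a → nextF I a = a →
      nextF I b ∉ I b → I (b+1) = insert (nextF I b) (I b \ {b}) → False := by
    intro a b hab hea hfa hgb heb
    have hin : a ∈ I (b+1) := by
      rw [heb, ← hab, hfa]
      exact Finset.mem_insert_self _ _
    have hout : a ∉ I b := by rw [← hab, hfa] at hgb; exact hgb
    have hx : a ∉ I a := by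
      have := entry_exit hI hin hout
      rw [hea] at this
      exact this
    obtain ⟨m, hm1, hm2, hm3, _⟩ := exit_walk hI a (cval (b+1) a) (b+1) hin
      (by rw [add_cval]; exact hx)
    rw [hm2] at hm3
    exact hx hm3
  intro i1 i2 h
  by_contra hne
  rcases nextF_spec hI i1 with ⟨e1, f1⟩ | ⟨m1, f1, g1, o1, e1⟩ <;>
    rcases nextF_spec hI i2 with ⟨e2, f2⟩ | ⟨m2, f2, g2, o2, e2⟩
  · exact hne ((f1.symm.trans h).trans f2)
  · exact mixed i1 i2 h e1 f1 g2 e2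
  · exact mixed i2 i1 h.symm e2 f2 g1 e1
  · -- both moving steps
    set j := nextF I i1 with hj
    have hj2 : nextF I i2 = j := h.symm
    have hin1 : j ∈ I (i1+1) := by rw [e1]; exact Finset.mem_insert_self _ _
    have hin2 : j ∈ I (i2+1) := by rw [e2, hj2]; exact Finset.mem_insert_self _ _
    have hout2 : j ∉ I i2 := by rw [← hj2]; exact g2
    have hout1 : j ∉ I i1 := g1
    -- walk from i1+1 to i2
    obtain ⟨m1', hm1', hm2', _, _⟩ := exit_walk hI j (cval (i1+1) i2) (i1+1) hin1
      (by rw [add_cval]; exact hout2)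
    obtain ⟨m2', hn1', hn2', _, _⟩ := exit_walk hI j (cval (i2+1) i1) (i2+1) hin2
      (by rw [add_cval]; exact hout1)
    have hk1n : cval (i1+1) i2 < n := cval_lt _ _
    have hm1n : m1' < n := by omega
    have hcj : cval (i1+1) j = m1' := by rw [← hm2', cval_cast _ _ hm1n]
    have hc2 : cval (i1+1) i2 ≠ n - 1 := by
      intro he
      apply hne
      have h2 := add_cval (i1+1) i2
      rw [he, add_sub_one] at h2
      exact h2
    -- express the second inequality in terms of base point i1+1
    have hbeq : i2 + 1 = (i1 + 1) + ((cval (i1+1) i2 + 1 : ℕ) : Fin n) := by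
      rw [show ((cval (i1+1) i2 + 1 : ℕ) : Fin n) = ((cval (i1+1) i2 : ℕ) : Fin n) + 1 by
        push_cast; ring, ← add_assoc, add_cval]
    have hlt2 : cval (i2+1) j < cval (i2+1) i1 := by
      have hx1 : cval (i2+1) j = m2' := by
        rw [← hn2', cval_cast]
        have := cval_lt (i2+1) i1
        omega
      rw [hx1]
      omega
    rw [hbeq, cval_shift _ _ _ (by omega), cval_shift _ _ _ (by omega), cval_pred, hcj] at hlt2
    split_ifs at hlt2 <;> omega

end AuxNecklace

/-- A decorated permutation: a permutation with fixed points colored by `1` or `-1`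
(non-fixed points carry the dummy color `1`). -/
structure DecoratedPerm (n : ℕ) where
  π : Equiv.Perm (Fin n)
  col : Fin n → ℤ
  col_fixed : ∀ i, π i = i → col i = 1 ∨ col i = -1
  col_nonfixed : ∀ i, π i ≠ i → col i = 1

/-- The Grassmann necklace associated to a decorated permutation:
`I_r = { i : i <_r π⁻¹(i), or π(i) = i and col(i) = -1 }`. -/
def necklaceOf {n : ℕ} (P : DecoratedPerm n) : Fin n → Finset (Fin n) :=
  fun r => Finset.univ.filter
    (fun i => cval r i < cval r (P.π.symm i) ∨ (P.π i = i ∧ P.col i = -1))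

/-- The forward map from Grassmann necklaces to decorated permutations:
`P` corresponds to the necklace `I`. -/
def Corresponds {n : ℕ} [NeZero n] (I : Fin n → Finset (Fin n)) (P : DecoratedPerm n) : Prop :=
  ∀ i : Fin n,
    ((I (i + 1) = I i ∧ i ∉ I i) → (P.π i = i ∧ P.col i = 1)) ∧
    ((I (i + 1) = I i ∧ i ∈ I i) → (P.π i = i ∧ P.col i = -1)) ∧
    (∀ j : Fin n, j ≠ i → i ∈ I i → I (i + 1) = insert j (I i \ {i}) → P.π i = j)


section AuxCorr
variable {n : ℕ} [NeZero n] {I : Fin n → Finset (Fin n)}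

lemma stepCases (hI : IsGrassmannNecklace I) {P : DecoratedPerm n} (hC : Corresponds I P)
    (i : Fin n) :
    (P.π i = i ∧ P.col i = 1 ∧ i ∉ I i ∧ I (i+1) = I i) ∨
    (P.π i = i ∧ P.col i = -1 ∧ i ∈ I i ∧ I (i+1) = I i) ∨
    (P.π i ≠ i ∧ i ∈ I i ∧ P.π i ∉ I i ∧ i ∉ I (i+1) ∧
      I (i+1) = insert (P.π i) (I i \ {i})) := by
  rcases nextF_spec hI i with ⟨e, f⟩ | ⟨m, f, g, o, e⟩
  · by_cases hm : i ∈ I i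
    · right; left
      obtain ⟨hp, hc⟩ := (hC i).2.1 ⟨e, hm⟩
      exact ⟨hp, hc, hm, e⟩
    · left
      obtain ⟨hp, hc⟩ := (hC i).1 ⟨e, hm⟩
      exact ⟨hp, hc, hm, e⟩
  · right; right
    have hp : P.π i = nextF I i := (hC i).2.2 _ f m e
    rw [← hp] at f g e
    exact ⟨f, m, g, o, e⟩

lemma dp_ext {P P' : DecoratedPerm n} (h1 : ∀ i, P.π i = P'.π i)
    (h2 : ∀ i, P.col i = P'.col i) : P = P' := by
  obtain ⟨p1, c1, _, _⟩ := P
  obtain ⟨p2, c2, _, _⟩ := P'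
  simp only [DecoratedPerm.mk.injEq]
  exact ⟨Equiv.ext h1, funext h2⟩

lemma step_mem_fixed (hI : IsGrassmannNecklace I) {P : DecoratedPerm n} (hC : Corresponds I P)
    {x i : Fin n} (hfix : P.π x = x) (hxmem : x ∈ I i) : x ∈ I (i+1) := by
  rcases stepCases hI hC i with ⟨_, _, _, e⟩ | ⟨_, _, _, e⟩ | ⟨hp, _, _, _, e⟩
  · rw [e]; exact hxmem
  · rw [e]; exact hxmem
  · rw [e]
    by_cases hxi : x = i
    · cases hxi; exact absurd hfix hp
    · exact Finset.mem_insert_of_mem (Finset.mem_sdiff.mpr ⟨hxmem, by simpa using hxi⟩)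

lemma step_not_mem_fixed (hI : IsGrassmannNecklace I) {P : DecoratedPerm n}
    (hC : Corresponds I P) {x i : Fin n} (hfix : P.π x = x) (hxmem : x ∉ I i) :
    x ∉ I (i+1) := by
  rcases stepCases hI hC i with ⟨_, _, _, e⟩ | ⟨_, _, _, e⟩ | ⟨hp, _, _, _, e⟩
  · rw [e]; exact hxmem
  · rw [e]; exact hxmem
  · rw [e]
    intro hmem
    rcases Finset.mem_insert.mp hmem with he | hs
    · apply hp
      have h2 : i = x := P.π.injective (by rw [hfix]; exact he.symm)
      rw [h2]; exact hfix
    · exact hxmem (Finset.mem_sdiff.mp hs).1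

lemma mem_of_fixed_neg (hI : IsGrassmannNecklace I) {P : DecoratedPerm n}
    (hC : Corresponds I P) {x : Fin n} (hfix : P.π x = x) (hcol : P.col x = -1) :
    ∀ r, x ∈ I r := by
  have hx : x ∈ I x := by
    rcases stepCases hI hC x with ⟨_, hc, _, _⟩ | ⟨_, _, hm, _⟩ | ⟨hp, _, _, _, _⟩
    · rw [hc] at hcol; norm_num at hcol
    · exact hm
    · exact absurd hfix hp
  have key : ∀ k : ℕ, x ∈ I (x + (k : Fin n)) := by
    intro k
    induction k with
    | zero => simpa using hx
    | succ k ih =>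
      rw [show ((k+1:ℕ) : Fin n) = (k : Fin n) + 1 by push_cast; ring, ← add_assoc]
      exact step_mem_fixed hI hC hfix ih
  intro r
  have h := key (cval x r)
  rwa [add_cval] at h

lemma not_mem_of_fixed_pos (hI : IsGrassmannNecklace I) {P : DecoratedPerm n}
    (hC : Corresponds I P) {x : Fin n} (hfix : P.π x = x) (hcol : P.col x = 1) :
    ∀ r, x ∉ I r := by
  have hx : x ∉ I x := by
    rcases stepCases hI hC x with ⟨_, _, hm, _⟩ | ⟨_, hc, _, _⟩ | ⟨hp, _, _, _, _⟩
    · exact hm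
    · rw [hc] at hcol; norm_num at hcol
    · exact absurd hfix hp
  have key : ∀ k : ℕ, x ∉ I (x + (k : Fin n)) := by
    intro k
    induction k with
    | zero => simpa using hx
    | succ k ih =>
      rw [show ((k+1:ℕ) : Fin n) = (k : Fin n) + 1 by push_cast; ring, ← add_assoc]
      exact step_not_mem_fixed hI hC hfix ih
  intro r
  have h := key (cval x r)
  rwa [add_cval] at h

lemma mem_nonfixed_iff (hI : IsGrassmannNecklace I) {P : DecoratedPerm n}
    (hC : Corresponds I P) {x : Fin n} (hnf : P.π x ≠ x) (r : Fin n) :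
    x ∈ I r ↔ cval r x < cval r (P.π.symm x) := by
  have hn : 0 < n := Nat.pos_of_ne_zero (NeZero.ne n)
  have hpi : P.π (P.π.symm x) = x := P.π.apply_symm_apply x
  have hne : P.π.symm x ≠ x := fun he => hnf ((congrArg P.π he).symm.trans hpi)
  have hdn : cval (x+1) (P.π.symm x) < n := cval_lt _ _
  have hdstar : (x+1) + ((cval (x+1) (P.π.symm x) : ℕ) : Fin n) = P.π.symm x := add_cval _ _
  have hdne : cval (x+1) (P.π.symm x) ≠ n - 1 := by
    intro he
    apply hne
    rw [← hdstar, he, add_sub_one]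
  have hbase : x ∉ I (x + 1) := by
    rcases stepCases hI hC x with ⟨hp, _⟩ | ⟨hp, _⟩ | ⟨_, _, _, o, _⟩
    · exact absurd hp hnf
    · exact absurd hp hnf
    · exact o
  have key : ∀ k : ℕ, k < n →
      (x ∈ I (x + 1 + (k : Fin n)) ↔ cval (x+1) (P.π.symm x) < k) := by
    intro k
    induction k with
    | zero =>
      intro _
      simp only [Nat.cast_zero, add_zero]
      exact iff_of_false hbase (by omega)
    | succ k ih =>
      intro hk1
      have hkn : k < n := by omega
      have ihk := ih hkn
      rw [show ((k+1 : ℕ) : Fin n) = (k : Fin n) + 1 by push_cast; ring, ← add_assoc]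
      have hixne : x + 1 + (k : Fin n) ≠ x := by
        intro he
        have h2 : x + 1 + ((n-1 : ℕ) : Fin n) = x := add_sub_one x
        have h3 := add_nat_inj hkn (show n - 1 < n by omega) (he.trans h2.symm)
        omega
      have hkdiff : k = cval (x+1) (P.π.symm x) ↔
          x + 1 + (k : Fin n) = P.π.symm x := by
        constructor
        · intro he; rw [he]; exact hdstar
        · intro he; exact add_nat_inj hkn hdn (he.trans hdstar.symm)
      rcases stepCases hI hC (x + 1 + (k : Fin n)) with ⟨hp, _, _, e⟩ | ⟨hp, _, _, e⟩ |
        ⟨hp, _, _, _, e⟩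
      · have hkd : k ≠ cval (x+1) (P.π.symm x) := by
          intro he
          have hieq := hkdiff.mp he
          have hpx : P.π (x + 1 + (k : Fin n)) = x := by rw [hieq]; exact hpi
          exact hixne (hp.symm.trans hpx)
        rw [e, ihk]; omega
      · have hkd : k ≠ cval (x+1) (P.π.symm x) := by
          intro he
          have hieq := hkdiff.mp he
          have hpx : P.π (x + 1 + (k : Fin n)) = x := by rw [hieq]; exact hpi
          exact hixne (hp.symm.trans hpx)
        rw [e, ihk]; omega
      · by_cases hkd : k = cval (x+1) (P.π.symm x)
        · have hieq := hkdiff.mp hkd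
          have hpx : P.π (x + 1 + (k : Fin n)) = x := by rw [hieq]; exact hpi
          rw [e, hpx]
          exact iff_of_true (Finset.mem_insert_self _ _) (by omega)
        · have hpx : P.π (x + 1 + (k : Fin n)) ≠ x := by
            intro he
            apply hkd
            apply hkdiff.mpr
            rw [← P.π.symm_apply_apply (x + 1 + (k : Fin n)), he]
          rw [e]
          simp only [Finset.mem_insert, Finset.mem_sdiff, Finset.mem_singleton]
          constructor
          · rintro (he | ⟨hxx, _⟩)
            · exact absurd he.symm hpx
            · have := ihk.mp hxx; omega
          · intro hdk
            have hdk' : cval (x+1) (P.π.symm x) < k := by omega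
            exact Or.inr ⟨ihk.mpr hdk', Ne.symm hixne⟩
  have hkn : cval (x+1) r < n := cval_lt _ _
  have hr : x + 1 + ((cval (x+1) r : ℕ) : Fin n) = r := add_cval _ _
  have h1 := key (cval (x+1) r) hkn
  rw [hr] at h1
  rw [h1]
  have hx1 : cval r x = n - 1 - cval (x+1) r := by
    conv_lhs => rw [← hr]
    rw [cval_shift (x+1) x _ (le_of_lt hkn), cval_pred, if_pos (by omega)]
  have hx2 : cval r (P.π.symm x) =
      if cval (x+1) r ≤ cval (x+1) (P.π.symm x)
      then cval (x+1) (P.π.symm x) - cval (x+1) r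
      else cval (x+1) (P.π.symm x) + n - cval (x+1) r := by
    conv_lhs => rw [← hr]
    rw [cval_shift (x+1) (P.π.symm x) _ (le_of_lt hkn)]
  rw [hx1, hx2]
  split_ifs with h <;> omega

lemma mem_necklaceOf {P : DecoratedPerm n} {r x : Fin n} :
    x ∈ necklaceOf P r ↔
      (cval r x < cval r (P.π.symm x) ∨ (P.π x = x ∧ P.col x = -1)) := by
  simp [necklaceOf]

lemma mem_self_of_nonfixed {P : DecoratedPerm n} {r : Fin n} (h : P.π r ≠ r) :
    r ∈ necklaceOf P r := by
  rw [mem_necklaceOf]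
  left
  rw [cval_self]
  have hs : P.π.symm r ≠ r := fun he => h ((congrArg P.π he).symm.trans (P.π.apply_symm_apply r))
  have h0 : cval r (P.π.symm r) ≠ 0 := fun hh => hs (cval_eq_zero_iff.mp hh)
  omega

lemma mem_self_fixed_iff {P : DecoratedPerm n} {r : Fin n} (h : P.π r = r) :
    r ∈ necklaceOf P r ↔ P.col r = -1 := by
  rw [mem_necklaceOf]
  have hs : P.π.symm r = r := by rw [Equiv.symm_apply_eq, h]
  rw [hs, cval_self]
  simp [h]

lemma image_not_mem {P : DecoratedPerm n} {r : Fin n} (h : P.π r ≠ r) :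
    P.π r ∉ necklaceOf P r := by
  rw [mem_necklaceOf]
  rintro (hlt | ⟨hfix, _⟩)
  · rw [Equiv.symm_apply_apply, cval_self] at hlt; omega
  · exact h (P.π.injective hfix)

lemma necklaceOf_fixed_eq {P : DecoratedPerm n} {r : Fin n} (h : P.π r = r) :
    necklaceOf P (r+1) = necklaceOf P r := by
  ext x
  simp only [mem_necklaceOf]
  by_cases hfx : P.π x = x
  · have hs : P.π.symm x = x := by rw [Equiv.symm_apply_eq, hfx]
    rw [hs]
    simp
  · have hxr : x ≠ r := fun he => hfx (by rw [he]; exact h)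
    have hsr : P.π.symm x ≠ r := by
      intro he
      apply hxr
      rw [← P.π.apply_symm_apply x, he, h]
    have h0x : cval r x ≠ 0 := fun hh => hxr (cval_eq_zero_iff.mp hh)
    have h0s : cval r (P.π.symm x) ≠ 0 := fun hh => hsr (cval_eq_zero_iff.mp hh)
    rw [cval_succ, cval_succ, if_neg hxr, if_neg hsr]
    have hiff : (cval r x - 1 < cval r (P.π.symm x) - 1) ↔
        (cval r x < cval r (P.π.symm x)) := by omega
    rw [hiff]

lemma necklaceOf_nonfixed_eq {P : DecoratedPerm n} {r : Fin n} (h : P.π r ≠ r) :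
    necklaceOf P (r+1) = insert (P.π r) (necklaceOf P r \ {r}) := by
  have hn2 : 2 ≤ n := by
    by_contra hc
    push_neg at hc
    apply h
    apply Fin.ext
    have h1 := (P.π r).isLt
    have h2 := r.isLt
    omega
  ext x
  simp only [mem_necklaceOf, Finset.mem_insert, Finset.mem_sdiff, Finset.mem_singleton]
  by_cases hx1 : x = P.π r
  · subst hx1
    have hs : P.π.symm (P.π r) = r := P.π.symm_apply_apply r
    have hpir : P.π r ≠ r := h
    have hlt : cval (r+1) (P.π r) < cval (r+1) r := by
      rw [hs] at *
      rw [cval_succ, cval_succ, if_neg hpir, if_pos rfl]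
      have := cval_lt r (P.π r)
      omega
    rw [hs]
    exact iff_of_true (Or.inl hlt) (Or.inl rfl)
  · by_cases hx2 : x = r
    · subst hx2
      have hsr : P.π.symm x ≠ x :=
        fun he => h ((congrArg P.π he).symm.trans (P.π.apply_symm_apply x))
      have h0s : cval x (P.π.symm x) ≠ 0 := fun hh => hsr (cval_eq_zero_iff.mp hh)
      apply iff_of_false
      · rintro (hlt | ⟨hfix, _⟩)
        · rw [cval_succ, cval_succ, if_pos rfl, if_neg hsr] at hlt
          have := cval_lt x (P.π.symm x)
          omega
        · exact h hfix
      · rintro (he | ⟨_, hne⟩)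
        · exact hx1 he
        · exact hne rfl
    · have hsr : P.π.symm x ≠ r := fun he => hx1 (by rw [← P.π.apply_symm_apply x, he])
      by_cases hfx : P.π x = x
      · have hs : P.π.symm x = x := by rw [Equiv.symm_apply_eq, hfx]
        rw [hs, cval_succ, if_neg hx2]
        constructor
        · rintro (hlt | hfix)
          · omega
          · exact Or.inr ⟨Or.inr hfix, hx2⟩
        · rintro (he | ⟨(hlt | hfix), _⟩)
          · exact absurd he hx1
          · exact absurd hlt (lt_irrefl _)
          · exact Or.inr hfix
      · have h0x : cval r x ≠ 0 := fun hh => hx2 (cval_eq_zero_iff.mp hh)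
        have h0s : cval r (P.π.symm x) ≠ 0 := fun hh => hsr (cval_eq_zero_iff.mp hh)
        rw [cval_succ, cval_succ, if_neg hx2, if_neg hsr]
        have hiff : (cval r x - 1 < cval r (P.π.symm x) - 1) ↔
            (cval r x < cval r (P.π.symm x)) := by omega
        rw [hiff]
        have hnfix : ¬(P.π x = x ∧ P.col x = -1) := fun hh => hfx hh.1
        constructor
        · rintro (hlt | hfix)
          · exact Or.inr ⟨Or.inl hlt, hx2⟩
          · exact absurd hfix hnfix
        · rintro (he | ⟨(hlt | hfix), _⟩)
          · exact absurd he hx1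
          · exact Or.inl hlt
          · exact absurd hfix hnfix

end AuxCorr

/-- `phiSet I j a` is `{j}` if `j ∈ I_a`, and otherwise `{max_a (I_a \ I_j)}`. -/
def phiSet {n : ℕ} (I : Fin n → Finset (Fin n)) (j a : Fin n) : Finset (Fin n) :=
  if j ∈ I a then {j} else cmax a (I a \ I j)

/-- One pass of the contraction algorithm (fuel-indexed; the loop walks `a ← a+1`). -/
def contractLoop {n : ℕ} [NeZero n] (π : Equiv.Perm (Fin n)) (j : Fin n) :
    ℕ → (Fin n → Fin n) → (Fin n → ℤ) → Fin n → Fin n →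
      (Fin n → Fin n) × (Fin n → ℤ)
  | 0, μ, c, q, a => (Function.update μ a q, c)
  | fuel + 1, μ, c, q, a =>
    if π a = j then (Function.update μ a q, c)
    else if q = a ∨ (cval (a + 1) q < cval (a + 1) (π a) ∧
                      cval (a + 1) (π a) < cval (a + 1) j) then
      contractLoop π j fuel (Function.update μ a q)
        (if q = a then Function.update c a 1 else c) (π a) (a + 1)
    else
      contractLoop π j fuel μ c q (a + 1)

/-- The contraction algorithm: output `(μ, col')` from `(π, col)` and `j`. -/
def contractAlg {n : ℕ} [NeZero n] (π : Equiv.Perm (Fin n)) (col : Fin n → ℤ) (j : Fin n) :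
    (Fin n → Fin n) × (Fin n → ℤ) :=
  contractLoop π j n (Function.update (⇑π) j j) (Function.update col j 1) (π j) (j + 1)

/-- One pass of the restriction algorithm (the loop walks `a ← a-1`). -/
def restrictLoop {n : ℕ} [NeZero n] (π : Equiv.Perm (Fin n)) (j : Fin n) :
    ℕ → (Fin n → Fin n) → (Fin n → ℤ) → Fin n → Fin n →
      (Fin n → Fin n) × (Fin n → ℤ)
  | 0, μ, c, q, a => (Function.update μ a q, c)
  | fuel + 1, μ, c, q, a =>
    if π a = j then (Function.update μ a q, c)
    else if q = a ∨ (cval a j < cval a (π a) ∧ cval a (π a) < cval a q) then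
      restrictLoop π j fuel (Function.update μ a q)
        (if q = a then Function.update c a 1 else c) (π a) (a - 1)
    else
      restrictLoop π j fuel μ c q (a - 1)

/-- The restriction algorithm: output `(μ, col')` from `(π, col)` and `j`. -/
def restrictAlg {n : ℕ} [NeZero n] (π : Equiv.Perm (Fin n)) (col : Fin n → ℤ) (j : Fin n) :
    (Fin n → Fin n) × (Fin n → ℤ) :=
  restrictLoop π j n (Function.update (⇑π) j j) (Function.update col j 1) (π j) (j - 1)

/-- the map from Grassmann necklaces to decorated permutations is a bijection,
with inverse given by `I_r = { i : i <_r π⁻¹(i) or (π(i) = i and col(i) = -1) }`. -/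
theorem necklace_decoratedPerm_bijection (n : ℕ) [NeZero n] :
    (∀ P : DecoratedPerm n,
        IsGrassmannNecklace (necklaceOf P) ∧ Corresponds (necklaceOf P) P) ∧
    (∀ I : Fin n → Finset (Fin n), IsGrassmannNecklace I →
        ∃! P : DecoratedPerm n, Corresponds I P) ∧
    (∀ (I : Fin n → Finset (Fin n)) (P : DecoratedPerm n),
        IsGrassmannNecklace I → Corresponds I P → I = necklaceOf P) := by
  have hn : 0 < n := Nat.pos_of_ne_zero (NeZero.ne n)
  refine ⟨?_, ?_, ?_⟩
  · -- Part 1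
    intro P
    constructor
    · intro i
      constructor
      · intro hmem
        by_cases h : P.π i = i
        · exact ⟨i, by
            rw [necklaceOf_fixed_eq h, Finset.sdiff_singleton_eq_erase,
              Finset.insert_erase hmem]⟩
        · exact ⟨P.π i, necklaceOf_nonfixed_eq h⟩
      · intro hmem
        have h : P.π i = i := by
          by_contra h
          exact hmem (mem_self_of_nonfixed h)
        exact necklaceOf_fixed_eq h
    · intro i
      refine ⟨?_, ?_, ?_⟩
      · rintro ⟨he, hmem⟩
        have h : P.π i = i := by
          by_contra h
          exact hmem (mem_self_of_nonfixed h)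
        refine ⟨h, ?_⟩
        rcases P.col_fixed i h with hc | hc
        · exact hc
        · exact absurd ((mem_self_fixed_iff h).mpr hc) hmem
      · rintro ⟨he, hmem⟩
        have h : P.π i = i := by
          by_contra h
          have h2 := necklaceOf_nonfixed_eq h
          rw [he] at h2
          rw [h2] at hmem
          rcases Finset.mem_insert.mp hmem with h1 | h1
          · exact h h1.symm
          · exact (Finset.mem_sdiff.mp h1).2 (Finset.mem_singleton_self i)
        exact ⟨h, (mem_self_fixed_iff h).mp hmem⟩
      · intro j hji hmem heq
        have h : P.π i ≠ i := by
          intro h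
          rw [necklaceOf_fixed_eq h] at heq
          rw [heq] at hmem
          rcases Finset.mem_insert.mp hmem with h1 | h1
          · exact hji h1.symm
          · exact (Finset.mem_sdiff.mp h1).2 (Finset.mem_singleton_self i)
        have h2 := necklaceOf_nonfixed_eq h
        have h3 : P.π i ∈ insert j (necklaceOf P i \ {i}) := by
          rw [← heq, h2]
          exact Finset.mem_insert_self _ _
        rcases Finset.mem_insert.mp h3 with h4 | h4
        · exact h4
        · exact absurd (Finset.mem_sdiff.mp h4).1 (image_not_mem h)
  · -- Part 2
    intro I hI
    have hbij : Function.Bijective (nextF I) :=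
      Finite.injective_iff_bijective.mp (nextF_inj hI)
    refine ⟨⟨Equiv.ofBijective _ hbij,
      fun i => if nextF I i = i ∧ i ∈ I i then -1 else 1, ?_, ?_⟩, ?_, ?_⟩
    · intro i _
      by_cases h : nextF I i = i ∧ i ∈ I i
      · right
        show (if nextF I i = i ∧ i ∈ I i then (-1:ℤ) else 1) = -1
        rw [if_pos h]
      · left
        show (if nextF I i = i ∧ i ∈ I i then (-1:ℤ) else 1) = 1
        rw [if_neg h]
    · intro i hne
      show (if nextF I i = i ∧ i ∈ I i then (-1:ℤ) else 1) = 1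
      rw [if_neg (fun hh => hne hh.1)]
    · -- Corresponds
      intro i
      refine ⟨?_, ?_, ?_⟩
      · rintro ⟨he, hmem⟩
        rcases nextF_spec hI i with ⟨_, f⟩ | ⟨m, _, _, _, _⟩
        · refine ⟨f, ?_⟩
          show (if nextF I i = i ∧ i ∈ I i then (-1:ℤ) else 1) = 1
          rw [if_neg (fun hh => hmem hh.2)]
        · exact absurd m hmem
      · rintro ⟨he, hmem⟩
        rcases nextF_spec hI i with ⟨_, f⟩ | ⟨_, _, _, o, _⟩
        · refine ⟨f, ?_⟩
          show (if nextF I i = i ∧ i ∈ I i then (-1:ℤ) else 1) = -1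
          rw [if_pos ⟨f, hmem⟩]
        · rw [he] at o
          exact absurd hmem o
      · intro j hji hmem heq
        rcases nextF_spec hI i with ⟨he, f⟩ | ⟨_, _, hni, _, e2⟩
        · rw [he] at heq
          rw [heq] at hmem
          rcases Finset.mem_insert.mp hmem with h1 | h1
          · exact absurd h1.symm hji
          · exact absurd (Finset.mem_singleton_self i) (Finset.mem_sdiff.mp h1).2
        · show nextF I i = j
          have h3 : nextF I i ∈ insert j (I i \ {i}) := by
            rw [← heq, e2]
            exact Finset.mem_insert_self _ _
          rcases Finset.mem_insert.mp h3 with h4 | h4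
          · exact h4
          · exact absurd (Finset.mem_sdiff.mp h4).1 hni
    · -- uniqueness
      intro P hP
      have hpi : ∀ i, P.π i = nextF I i := by
        intro i
        rcases stepCases hI hP i with ⟨hp, _, hm, he⟩ | ⟨hp, _, hm, he⟩ |
          ⟨hp, hm, hpni, _, he⟩
        · rcases nextF_spec hI i with ⟨_, f⟩ | ⟨m, _, _, _, _⟩
          · rw [hp, f]
          · exact absurd m hm
        · rcases nextF_spec hI i with ⟨_, f⟩ | ⟨_, _, _, o, _⟩
          · rw [hp, f]
          · rw [he] at o
            exact absurd hm o
        · rcases nextF_spec hI i with ⟨heq2, _⟩ | ⟨_, _, hni2, _, e2⟩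
          · rw [heq2] at he
            rw [he] at hm
            rcases Finset.mem_insert.mp hm with h1 | h1
            · exact absurd h1.symm hp
            · exact absurd (Finset.mem_singleton_self i) (Finset.mem_sdiff.mp h1).2
          · have h3 : P.π i ∈ insert (nextF I i) (I i \ {i}) := by
              rw [← e2, he]
              exact Finset.mem_insert_self _ _
            rcases Finset.mem_insert.mp h3 with h4 | h4
            · exact h4
            · exact absurd (Finset.mem_sdiff.mp h4).1 hpni
      apply dp_ext
      · exact hpi
      · intro i
        rcases stepCases hI hP i with ⟨hp, hc, hm, _⟩ | ⟨hp, hc, hm, _⟩ |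
          ⟨hp, _, _, _, _⟩
        · rw [hc]
          show (1 : ℤ) = if nextF I i = i ∧ i ∈ I i then -1 else 1
          rw [if_neg (fun hh => hm hh.2)]
        · rw [hc]
          show (-1 : ℤ) = if nextF I i = i ∧ i ∈ I i then -1 else 1
          rw [if_pos ⟨(hpi i).symm.trans hp, hm⟩]
        · rw [P.col_nonfixed i hp]
          show (1 : ℤ) = if nextF I i = i ∧ i ∈ I i then -1 else 1
          rw [if_neg (fun hh => hp ((hpi i).trans hh.1))]
  · -- Part 3
    intro I P hI hC
    funext r
    ext x
    by_cases hfx : P.π x = x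
    · rcases P.col_fixed x hfx with hc | hc
      · apply iff_of_false (not_mem_of_fixed_pos hI hC hfx hc r)
        rw [mem_necklaceOf]
        rintro (hlt | ⟨_, hcol⟩)
        · rw [show P.π.symm x = x by rw [Equiv.symm_apply_eq, hfx]] at hlt
          exact absurd hlt (lt_irrefl _)
        · rw [hc] at hcol
          norm_num at hcol
      · apply iff_of_true (mem_of_fixed_neg hI hC hfx hc r)
        rw [mem_necklaceOf]
        exact Or.inr ⟨hfx, hc⟩
    · rw [mem_nonfixed_iff hI hC hfx r, mem_necklaceOf]
      constructor
      · exact Or.inl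
      · rintro (h | ⟨hf, _⟩)
        · exact h
        · exact absurd hf hfx
end

section
/- Let M be a positroid with Grassmann necklace (I_1,...,I_n), let j ∈ [n] be a non-fixed-point of its decorated permutation, and set M' = { H ∈ M : j ∈ H }. Then for any a ∈ [n] with j ∉ I_a, the set (I_a \ {max_a(I_a \ I_j)}) ∪ {j} is a basis of M', i.e., it lies in M and contains j. -/
open Finset

namespace PosAux
open Fin.NatCast
variable {n : ℕ}

lemma cval_lt [NeZero n] (t a : Fin n) : cval t a < n := (a - t).isLt

lemma cval_cases (t a : Fin n) :
    (t.val ≤ a.val ∧ cval t a = a.val - t.val) ∨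
    (a.val < t.val ∧ cval t a = a.val + n - t.val) := by
  have ht := t.isLt
  have ha := a.isLt
  have : cval t a = (n - ↑t + ↑a) % n := by
    simp [cval, Fin.sub_def]
  rcases le_or_gt t.val a.val with h | h
  · left
    refine ⟨h, ?_⟩
    rw [this]
    have : n - ↑t + ↑a = (a.val - t.val) + n := by omega
    rw [this, Nat.add_mod_right, Nat.mod_eq_of_lt (by omega)]
  · right
    refine ⟨h, ?_⟩
    rw [this, Nat.mod_eq_of_lt (by omega)]
    omega

lemma cval_inj {t a b : Fin n} (h : cval t a = cval t b) : a = b := by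
  rcases cval_cases t a with ⟨h1, h2⟩ | ⟨h1, h2⟩ <;>
    rcases cval_cases t b with ⟨h3, h4⟩ | ⟨h3, h4⟩ <;>
    · apply Fin.ext
      have := a.isLt; have := b.isLt; have := t.isLt
      omega

lemma cval_self (t : Fin n) : cval t t = 0 := by
  rcases cval_cases t t with ⟨h1, h2⟩ | ⟨h1, h2⟩ <;> omega

lemma add_cval [NeZero n] (s t : Fin n) : s + ((cval s t : ℕ) : Fin n) = t := by
  have : ((cval s t : ℕ) : Fin n) = t - s := by
    simp [cval, Fin.cast_val_eq_self]
  rw [this, add_sub_cancel]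

lemma cval_add_nat [NeZero n] (s : Fin n) (d : ℕ) (hd : d < n) :
    cval s (s + (d : Fin n)) = d := by
  have : (s + (d : Fin n)) - s = (d : Fin n) := add_sub_cancel_left _ _
  rw [cval, this, Fin.val_natCast, Nat.mod_eq_of_lt hd]

lemma cval_lt_imp {t s e : Fin n} (h : cval t e < cval t s) : cval s t ≤ cval s e := by
  have h1 := t.isLt; have h2 := s.isLt; have h3 := e.isLt
  rcases cval_cases t e with ⟨a1, a2⟩ | ⟨a1, a2⟩ <;>
  rcases cval_cases t s with ⟨b1, b2⟩ | ⟨b1, b2⟩ <;>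
  rcases cval_cases s t with ⟨c1, c2⟩ | ⟨c1, c2⟩ <;>
  rcases cval_cases s e with ⟨d1, d2⟩ | ⟨d1, d2⟩ <;> omega

section Sorting

lemma count_sort_filter (S : Finset ℕ) (x : ℕ) :
    (S.sort (· ≤ ·)).countP (fun y => decide (y ≤ x)) = (S.filter (fun y => y ≤ x)).card := by
  have h1 : ((S.filter (fun y => y ≤ x)).card : ℕ) =
      Multiset.countP (fun y => y ≤ x) S.val := by
    rw [Finset.card, Finset.filter_val, Multiset.countP_eq_card_filter]
  rw [h1, ← Multiset.coe_countP, Finset.sort_eq]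

lemma sorted_count_lower {l : List ℕ} (hs : l.Pairwise (· ≤ ·)) {i : ℕ} (hi : i < l.length) :
    i + 1 ≤ l.countP (fun y => decide (y ≤ l.get ⟨i, hi⟩)) := by
  have hsplit := List.take_append_drop (i + 1) l
  have := List.countP_append (p := fun y => decide (y ≤ l.get ⟨i, hi⟩)) (l₁ := l.take (i + 1)) (l₂ := l.drop (i + 1))
  rw [hsplit] at this
  have htake : (l.take (i + 1)).countP (fun y => decide (y ≤ l.get ⟨i, hi⟩)) =
      (l.take (i + 1)).length := by
    rw [List.countP_eq_length]
    intro a ha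
    rw [List.mem_take_iff_getElem] at ha
    obtain ⟨k, hk, rfl⟩ := ha
    simp only [decide_eq_true_eq]
    have : l[k] = l.get ⟨k, by omega⟩ := rfl
    rw [this]
    exact hs.rel_get_of_le (by simp; omega)
  have hlen : (l.take (i + 1)).length = i + 1 := by
    rw [List.length_take]; omega
  omega

lemma sorted_count_upper {l : List ℕ} (hs : l.Pairwise (· ≤ ·)) {i : ℕ} (hi : i < l.length)
    {x : ℕ} (hx : x < l.get ⟨i, hi⟩) :
    l.countP (fun y => decide (y ≤ x)) ≤ i := by
  have hsplit := List.take_append_drop i l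
  have hcp := List.countP_append (p := fun y => decide (y ≤ x)) (l₁ := l.take i) (l₂ := l.drop i)
  rw [hsplit] at hcp
  have hdrop : (l.drop i).countP (fun y => decide (y ≤ x)) = 0 := by
    rw [List.countP_eq_zero]
    intro a ha
    rw [List.mem_drop_iff_getElem] at ha
    obtain ⟨k, hk, rfl⟩ := ha
    simp only [decide_eq_true_eq, not_le]
    have : l[i + k] = l.get ⟨i + k, by omega⟩ := rfl
    rw [this]
    have : l.get ⟨i, hi⟩ ≤ l.get ⟨i + k, by omega⟩ := hs.rel_get_of_le (by simp)
    omega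
  have htake : (l.take i).length = min i l.length := List.length_take
  have hc2 : (l.take i).countP (fun y => decide (y ≤ x)) ≤ (l.take i).length :=
    List.countP_le_length
  omega

lemma gale_of_counts (S T : Finset ℕ) (hcard : S.card = T.card)
    (h : ∀ x, (T.filter (fun y => y ≤ x)).card ≤ (S.filter (fun y => y ≤ x)).card) :
    List.Forall₂ (· ≤ ·) (S.sort (· ≤ ·)) (T.sort (· ≤ ·)) := by
  rw [List.forall₂_iff_get]
  constructor
  · rw [Finset.length_sort, Finset.length_sort, hcard]
  · intro i h1 h2
    set x := (T.sort (· ≤ ·)).get ⟨i, h2⟩ with hx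
    by_contra hlt
    push_neg at hlt
    have hA : i + 1 ≤ ((T.filter (fun y => y ≤ x)).card) := by
      have := sorted_count_lower (Finset.pairwise_sort T (· ≤ ·)) h2
      rwa [count_sort_filter] at this
    have hB : ((S.filter (fun y => y ≤ x)).card) ≤ i := by
      have := sorted_count_upper (Finset.pairwise_sort S (· ≤ ·)) h1 hlt
      rwa [count_sort_filter] at this
    have := h x
    omega

end Sorting

variable [NeZero n] {I : Fin n → Finset (Fin n)} (hI : IsGrassmannNecklace I)

section Necklace
include hI

lemma mem_step {e b : Fin n} (he : e ∈ I b) (hne : e ≠ b) : e ∈ I (b + 1) := by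
  by_cases hb : b ∈ I b
  · obtain ⟨x, hx⟩ := (hI b).1 hb
    rw [hx]
    exact Finset.mem_insert.mpr (Or.inr (Finset.mem_sdiff.mpr ⟨he, by simp [hne]⟩))
  · rw [(hI b).2 hb]; exact he

lemma mem_of_le_aux (d : ℕ) : ∀ s e : Fin n, e ∈ I s → d ≤ cval s e →
    e ∈ I (s + (d : Fin n)) := by
  induction d with
  | zero => intro s e he _; simpa using he
  | succ d ih =>
    intro s e he hd
    have hdn : d < n := lt_of_lt_of_le (by omega) (le_of_lt (cval_lt s e))
    have h1 : e ∈ I (s + (d : Fin n)) := ih s e he (by omega)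
    have hne : e ≠ s + (d : Fin n) := by
      intro h
      have h2 := cval_add_nat s d hdn
      rw [← h] at h2
      omega
    have := mem_step hI h1 hne
    have hcast : ((d + 1 : ℕ) : Fin n) = ((d : ℕ) : Fin n) + 1 := by push_cast; ring
    rw [hcast, ← add_assoc]
    exact this

lemma mem_of_le {s t e : Fin n} (he : e ∈ I s) (h : cval s t ≤ cval s e) : e ∈ I t := by
  have := mem_of_le_aux hI (cval s t) s e he h
  rwa [add_cval] at this

lemma card_step (i : Fin n) : (I (i + 1)).card ≤ (I i).card := by
  by_cases hb : i ∈ I i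
  · obtain ⟨x, hx⟩ := (hI i).1 hb
    rw [hx]
    calc (insert x (I i \ {i})).card ≤ (I i \ {i}).card + 1 := Finset.card_insert_le _ _
    _ ≤ (I i).card := by
        rw [Finset.card_sdiff_of_subset (s := {i}) (t := I i) (by simpa using hb)]
        rw [Finset.card_singleton]
        have : 1 ≤ (I i).card := Finset.card_pos.mpr ⟨i, hb⟩
        omega
  · rw [(hI i).2 hb]

lemma card_le_aux (d : ℕ) : ∀ s : Fin n, (I (s + (d : Fin n))).card ≤ (I s).card := by
  induction d with
  | zero => intro s; simp
  | succ d ih =>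
    intro s
    have hcast : ((d + 1 : ℕ) : Fin n) = ((d : ℕ) : Fin n) + 1 := by push_cast; ring
    rw [hcast, ← add_assoc]
    exact le_trans (card_step hI _) (ih s)

lemma card_const (s t : Fin n) : (I s).card = (I t).card := by
  have h1 := card_le_aux hI (cval s t) s
  have h2 := card_le_aux hI (cval t s) t
  rw [add_cval] at h1 h2
  omega

lemma fact1 (s t : Fin n) (x : ℕ) :
    ((I s).filter (fun e => cval t e ≤ x)).card ≤
      ((I t).filter (fun e => cval t e ≤ x)).card := by
  by_cases hs : 0 < cval t s ∧ cval t s ≤ x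
  · have hsub : (I t).filter (fun e => ¬ (cval t e ≤ x)) ⊆
        (I s).filter (fun e => ¬ (cval t e ≤ x)) := by
      intro e he
      rw [Finset.mem_filter] at he ⊢
      exact ⟨mem_of_le hI he.1 (by omega), he.2⟩
    have h1 := Finset.card_filter_add_card_filter_not
      (s := I t) (fun e => cval t e ≤ x)
    have h2 := Finset.card_filter_add_card_filter_not
      (s := I s) (fun e => cval t e ≤ x)
    have h3 := Finset.card_le_card hsub
    have h4 := card_const hI s t
    omega
  · by_cases hst : s = t
    · subst hst; exact le_refl _
    · have h0 : cval t s ≠ 0 := fun h =>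
        hst (cval_inj (h.trans (cval_self t).symm))
      have hgt : x < cval t s := by omega
      apply Finset.card_le_card
      intro e he
      rw [Finset.mem_filter] at he ⊢
      exact ⟨mem_of_le hI he.1 (cval_lt_imp (by omega)), he.2⟩

lemma strict_count {j a m t : Fin n} (x : ℕ)
    (hjj : j ∈ I j) (hja : j ∉ I a) (hma : m ∈ I a) (hmj : m ∉ I j)
    (hmax : ∀ e ∈ I a, e ∉ I j → cval a e ≤ cval a m)
    (hjx : cval t j ≤ x) (hmx : x < cval t m) :
    ((I a).filter (fun e => cval t e ≤ x)).card + 1 ≤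
      ((I t).filter (fun e => cval t e ≤ x)).card := by
  have key : ((I a).filter (fun e => cval t e ≤ x)).card <
      ((I j).filter (fun e => cval t e ≤ x)).card := by
    have f1 : cval a m < cval a j := by
      by_contra h
      exact hmj (mem_of_le hI hma (by omega))
    have hvt := t.isLt; have hvj := j.isLt; have hva := a.isLt
    have hvm := m.isLt; have hne : a ≠ j := fun h => hja (h ▸ hjj)
    by_cases hax : cval t a ≤ x
    · -- case (ii)
      set p : Fin n → Prop := fun e => cval t e ≤ x with hp
      have claim1 : (I j) \ (I a) ⊆ (I j).filter p \ (I a) := by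
        intro e he
        rw [Finset.mem_sdiff] at he
        have hje : cval j e < cval j a := by
          by_contra h
          exact he.2 (mem_of_le hI he.1 (by omega))
        rw [Finset.mem_sdiff, Finset.mem_filter]
        refine ⟨⟨he.1, ?_⟩, he.2⟩
        have hve := e.isLt
        rcases cval_cases t j with ⟨a1, a2⟩ | ⟨a1, a2⟩ <;>
        rcases cval_cases t a with ⟨b1, b2⟩ | ⟨b1, b2⟩ <;>
        rcases cval_cases t e with ⟨c1, c2⟩ | ⟨c1, c2⟩ <;>
        rcases cval_cases t m with ⟨d1, d2⟩ | ⟨d1, d2⟩ <;>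
        rcases cval_cases j e with ⟨e1, e2⟩ | ⟨e1, e2⟩ <;>
        rcases cval_cases j a with ⟨g1, g2⟩ | ⟨g1, g2⟩ <;>
        rcases cval_cases a m with ⟨i1, i2⟩ | ⟨i1, i2⟩ <;>
        rcases cval_cases a j with ⟨k1, k2⟩ | ⟨k1, k2⟩ <;> omega
      have h1 := Finset.card_inter_add_card_sdiff ((I a).filter p) (I j)
      have h2 := Finset.card_inter_add_card_sdiff ((I j).filter p) (I a)
      have h3 : (I a).filter p ∩ (I j) = (I j).filter p ∩ (I a) := by
        ext e
        simp only [Finset.mem_inter, Finset.mem_filter]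
        tauto
      rw [h3] at h1
      have h4 : ((I a).filter p \ (I j)) ⊆ ((I a) \ (I j)).erase m := by
        intro e he
        rw [Finset.mem_sdiff, Finset.mem_filter] at he
        rw [Finset.mem_erase, Finset.mem_sdiff]
        refine ⟨?_, he.1.1, he.2⟩
        intro hem
        subst hem
        exact absurd he.1.2 (by omega)
      have h4' := Finset.card_le_card h4
      have h5 : m ∈ (I a) \ (I j) := Finset.mem_sdiff.mpr ⟨hma, hmj⟩
      have h6 : (((I a) \ (I j)).erase m).card = ((I a) \ (I j)).card - 1 :=
        Finset.card_erase_of_mem h5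
      have h7 : ((I a) \ (I j)).card = ((I j) \ (I a)).card :=
        Finset.card_sdiff_comm (card_const hI a j)
      have h8 := Finset.card_le_card claim1
      have h9 : 0 < ((I a) \ (I j)).card := Finset.card_pos.mpr ⟨m, h5⟩
      have h10 := Finset.card_le_card (Finset.sdiff_subset (s := (I j).filter p) (t := I a))
      show ((I a).filter p).card < ((I j).filter p).card
      omega
    · -- case (i)
      have hsub : (I a).filter (fun e => cval t e ≤ x) ⊂
          (I j).filter (fun e => cval t e ≤ x) := by
        constructor
        · intro e he
          rw [Finset.mem_filter] at he ⊢
          refine ⟨?_, he.2⟩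
          by_contra hej
          have hae : cval a e ≤ cval a m := hmax e he.1 hej
          have hex := he.2
          have hve := e.isLt
          rcases cval_cases t j with ⟨a1, a2⟩ | ⟨a1, a2⟩ <;>
          rcases cval_cases t a with ⟨b1, b2⟩ | ⟨b1, b2⟩ <;>
          rcases cval_cases t e with ⟨c1, c2⟩ | ⟨c1, c2⟩ <;>
          rcases cval_cases t m with ⟨d1, d2⟩ | ⟨d1, d2⟩ <;>
          rcases cval_cases a e with ⟨e1, e2⟩ | ⟨e1, e2⟩ <;>
          rcases cval_cases a t with ⟨g1, g2⟩ | ⟨g1, g2⟩ <;>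
          rcases cval_cases a m with ⟨i1, i2⟩ | ⟨i1, i2⟩ <;>
          rcases cval_cases a j with ⟨k1, k2⟩ | ⟨k1, k2⟩ <;> omega
        · intro hsup
          have : j ∈ (I a).filter (fun e => cval t e ≤ x) :=
            hsup (Finset.mem_filter.mpr ⟨hjj, hjx⟩)
          exact hja (Finset.mem_filter.mp this).1
      exact Finset.card_lt_card hsub
  have := fact1 hI j t x
  omega

end Necklace
end PosAux

/-- if `j` is not a fixed point and `j ∉ I_a`, then
`(I_a \ {max_a(I_a \ I_j)}) ∪ {j}` is a basis of `M' = {H ∈ M : j ∈ H}`. -/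
theorem contraction_basis_mem (n : ℕ) [NeZero n] (I : Fin n → Finset (Fin n))
    (hI : IsGrassmannNecklace I) (j : Fin n)
    (hj : I (j + 1) ≠ I j)  -- `j` is not a fixed point of the decorated permutation
    (a : Fin n) (ha : j ∉ I a) :
    j ∈ insert j (I a \ cmax a (I a \ I j)) ∧
    (∀ t : Fin n, galeLE t (I t) (insert j (I a \ cmax a (I a \ I j)))) := by
  classical
  have hjj : j ∈ I j := by
    by_contra h
    exact hj ((hI j).2 h)
  have hDne : (I a \ I j).Nonempty := by
    rw [Finset.sdiff_nonempty]
    intro hsub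
    have hcard := PosAux.card_const hI j a
    have heq := Finset.eq_of_subset_of_card_le hsub (le_of_eq hcard)
    exact ha (by rw [heq]; exact hjj)
  obtain ⟨m, hmD, hmax⟩ := Finset.exists_max_image (I a \ I j) (cval a) hDne
  have hma : m ∈ I a := (Finset.mem_sdiff.mp hmD).1
  have hmj : m ∉ I j := (Finset.mem_sdiff.mp hmD).2
  have hcmax : cmax a (I a \ I j) = {m} := by
    ext y
    simp only [cmax, Finset.mem_filter, Finset.mem_singleton]
    constructor
    · rintro ⟨hy, hmaxy⟩
      exact PosAux.cval_inj (le_antisymm (hmax y hy) (hmaxy m hmD))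
    · rintro rfl
      exact ⟨hmD, hmax⟩
  rw [hcmax]
  refine ⟨Finset.mem_insert_self _ _, ?_⟩
  intro t
  have hinj : Function.Injective (cval t) := fun x y h => PosAux.cval_inj h
  have hcount : ∀ x : ℕ,
      ((insert j (I a \ {m})).filter (fun e => cval t e ≤ x)).card ≤
        ((I t).filter (fun e => cval t e ≤ x)).card := by
    intro x
    have hfs : (I a \ {m}).filter (fun e => cval t e ≤ x) =
        ((I a).filter (fun e => cval t e ≤ x)).erase m := by
      ext e
      simp only [Finset.mem_filter, Finset.mem_sdiff, Finset.mem_erase, Finset.mem_singleton]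
      tauto
    by_cases hjx : cval t j ≤ x
    · rw [Finset.filter_insert, if_pos hjx]
      have hjnot : j ∉ (I a \ {m}).filter (fun e => cval t e ≤ x) := by
        simp only [Finset.mem_filter, Finset.mem_sdiff, Finset.mem_singleton]
        tauto
      rw [Finset.card_insert_of_notMem hjnot, hfs]
      by_cases hmx : cval t m ≤ x
      · have hmem : m ∈ (I a).filter (fun e => cval t e ≤ x) :=
          Finset.mem_filter.mpr ⟨hma, hmx⟩
        rw [Finset.card_erase_of_mem hmem]
        have h1 := PosAux.fact1 hI a t x
        have h2 : 0 < ((I a).filter (fun e => cval t e ≤ x)).card :=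
          Finset.card_pos.mpr ⟨m, hmem⟩
        omega
      · rw [Finset.erase_eq_of_notMem (by simp only [Finset.mem_filter]; tauto)]
        exact PosAux.strict_count hI x hjj ha hma hmj
          (fun e he hej => hmax e (Finset.mem_sdiff.mpr ⟨he, hej⟩)) hjx (by omega)
    · rw [Finset.filter_insert, if_neg hjx, hfs]
      calc (((I a).filter (fun e => cval t e ≤ x)).erase m).card
          ≤ ((I a).filter (fun e => cval t e ≤ x)).card :=
            Finset.card_le_card (Finset.erase_subset _ _)
        _ ≤ _ := PosAux.fact1 hI a t x
  have hcardB : (I t).card = (insert j (I a \ {m})).card := by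
    have hjn : j ∉ I a \ {m} := by
      simp only [Finset.mem_sdiff, Finset.mem_singleton]
      tauto
    have h1 : ({m} : Finset (Fin n)) ⊆ I a := by simpa using hma
    rw [Finset.card_insert_of_notMem hjn, Finset.card_sdiff_of_subset h1, Finset.card_singleton]
    have h2 := PosAux.card_const hI t a
    have h3 : 0 < (I a).card := Finset.card_pos.mpr ⟨m, hma⟩
    omega
  unfold galeLE galeLEKey
  apply PosAux.gale_of_counts
  · rw [Finset.card_image_of_injective _ hinj, Finset.card_image_of_injective _ hinj]
    exact hcardB
  · intro x
    rw [Finset.filter_image, Finset.filter_image,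
      Finset.card_image_of_injective _ hinj, Finset.card_image_of_injective _ hinj]
    simpa [Function.comp] using hcount x
end
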